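/- Let A be a finitely generated abelian group, let T be its torsion subgroup (which is finite), and let o = |T| be its order. Let B be the intersection of all subgroups of A of index o. Then B is a characteristic subgroup of A of finite index, and B is torsion-free, i.e. B ∩ T = {1} (equivalently, the only element of B of finite order is the identity). -/

import Mathlib

set_option maxHeartbeats 1000000 in
/-- Let `A` be a finitely generated abelian group with torsion
subgroup `T` of order `o`.  Then the intersection `B` of all subgroups of `A` of index
`o` is a characteristic subgroup of finite index, and `B` is torsion-free, i.e.
`B ⊓ T = ⊥`. -/
theorem stmt13 {A : Type*} [CommGroup A] (hfg : Group.FG A)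
    (o : ℕ) (ho : o = Nat.card (CommGroup.torsion A))
    (B : Subgroup A) (hB : B = ⨅ (H : Subgroup A) (_ : H.index = o), H) :
    B.Characteristic ∧ B.FiniteIndex ∧ B ⊓ CommGroup.torsion A = ⊥ := by
  classical
  haveI : AddGroup.FG (Additive A) := GroupFG.iff_add_fg.mp hfg
  obtain ⟨n, ι, fι, p, hp, ee, ⟨e⟩⟩ :=
    AddCommGroup.equiv_free_prod_directSum_zmod (Additive A)
  haveI : ∀ i, NeZero (p i ^ ee i) := fun i => ⟨pow_ne_zero _ (hp i).pos.ne'⟩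
  haveI : ∀ i, Fintype (ZMod (p i ^ ee i)) := fun i => ZMod.fintype _
  set D := DirectSum ι (fun i => ZMod (p i ^ ee i)) with hD
  haveI : Finite D :=
    Finite.of_equiv (∀ i, ZMod (p i ^ ee i))
      ((DFinsupp.equivFunOnFintype :
        (Π₀ i : ι, ZMod (p i ^ ee i)) ≃ ∀ i, ZMod (p i ^ ee i))).symm
  -- torsion characterization
  have htor : ∀ x : A, x ∈ CommGroup.torsion A ↔ (e (Additive.ofMul x)).1 = 0 := by
    intro x
    constructor
    · intro hx
      obtain ⟨m, hm, hxm⟩ := isOfFinOrder_iff_pow_eq_one.mp hx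
      have h1 : m • (e (Additive.ofMul x)) = 0 := by
        rw [← map_nsmul, ← ofMul_pow, hxm, ofMul_one, map_zero]
      have h2 : m • (e (Additive.ofMul x)).1 = 0 := by
        exact congrArg Prod.fst h1
      have h3 : (m : ℤ) • (e (Additive.ofMul x)).1 = 0 := by
        rw [natCast_zsmul]; exact h2
      rcases smul_eq_zero.mp h3 with h | h
      · exact absurd (by exact_mod_cast h) hm.ne'
      · exact h
    · intro h1
      refine isOfFinOrder_iff_pow_eq_one.mpr ⟨Nat.card D, Nat.card_pos, ?_⟩
      have h2 : e (Additive.ofMul (x ^ Nat.card D)) = 0 := by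
        rw [ofMul_pow, map_nsmul]
        ext : 1
        · simp [h1]
        · simp only [Prod.snd_zero]; exact card_nsmul_eq_zero'
      have h0 : Additive.ofMul (x ^ Nat.card D) = 0 := by
        apply e.injective; rw [map_zero]; exact h2
      exact h0
  -- the complement subgroup as kernel of f
  set f : A →* Multiplicative D :=
    { toFun := fun x => Multiplicative.ofAdd ((e (Additive.ofMul x)).2)
      map_one' := by simp
      map_mul' := fun x y => by
        show Multiplicative.ofAdd (e (Additive.ofMul (x * y))).2 = _
        rw [ofMul_mul, map_add, Prod.snd_add, ofAdd_add] } with hf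
  have hfsurj : Function.Surjective f := by
    intro d
    refine ⟨Additive.toMul (e.symm (0, d.toAdd)), ?_⟩
    simp [hf]
  -- cardinality of torsion = card D
  have hcard : Nat.card (CommGroup.torsion A) = Nat.card D := by
    apply Nat.card_eq_of_bijective
      (fun t : CommGroup.torsion A => (e (Additive.ofMul (t : A))).2)
    constructor
    · rintro ⟨t1, ht1⟩ ⟨t2, ht2⟩ h
      have e1 := (htor t1).mp ht1
      have e2 := (htor t2).mp ht2
      have : e (Additive.ofMul t1) = e (Additive.ofMul t2) := by
        ext : 1
        · rw [e1, e2]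
        · exact h
      simpa using e.injective this
    · intro d
      refine ⟨⟨Additive.toMul (e.symm (0, d)), ?_⟩, ?_⟩
      · rw [htor]; simp
      · simp
  have hoD : o = Nat.card D := by rw [ho, hcard]
  have hopos : 0 < o := by rw [hoD]; exact Nat.card_pos
  have hker_index : (f.ker).index = o := by
    rw [Subgroup.index_ker, MonoidHom.range_eq_top.mpr hfsurj, hoD]
    rw [Nat.card_congr Subgroup.topEquiv.toEquiv]
    exact Nat.card_congr Multiplicative.toAdd
  have hmem : ∀ x : A, x ∈ B ↔ ∀ H : Subgroup A, H.index = o → x ∈ H := by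
    intro x
    rw [hB]
    simp only [Subgroup.mem_iInf]
  have hBle : ∀ H : Subgroup A, H.index = o → B ≤ H := by
    intro H hH x hx
    exact (hmem x).mp hx H hH
  refine ⟨?_, ?_, ?_⟩
  · -- characteristic
    have key : ∀ φ : A ≃* A, ∀ x ∈ B, φ x ∈ B := by
      intro φ x hx
      rw [hmem]
      intro H hH
      have h1 : (Subgroup.comap φ.toMonoidHom H).index = o := by
        rw [Subgroup.index_comap_of_surjective _ φ.surjective, hH]
      exact (hmem x).mp hx _ h1
    rw [Subgroup.characteristic_iff_comap_eq]
    intro φ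
    ext x
    simp only [Subgroup.mem_comap]
    constructor
    · intro h
      have := key φ.symm _ h
      simpa using this
    · exact key φ x
  · -- finite index
    have hKB : (powMonoidHom o : A →* A).range ≤ B := by
      rintro _ ⟨x, rfl⟩
      rw [hmem]
      intro H hH
      haveI : Finite (A ⧸ H) := by
        apply Nat.finite_of_card_ne_zero
        rw [← Subgroup.index_eq_card, hH]
        exact hopos.ne'
      have hcardQ : Nat.card (A ⧸ H) = o := by
        rw [← Subgroup.index_eq_card, hH]
      have : ((x : A ⧸ H)) ^ o = 1 := by
        rw [← hcardQ]
        exact pow_card_eq_one'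
      rwa [← QuotientGroup.mk_pow, QuotientGroup.eq_one_iff] at this
    haveI : Finite (A ⧸ (powMonoidHom o : A →* A).range) := by
      apply CommGroup.finite_of_fg_torsion
      intro y
      refine isOfFinOrder_iff_pow_eq_one.mpr ⟨o, hopos, ?_⟩
      induction y using QuotientGroup.induction_on with
      | H x =>
        rw [← QuotientGroup.mk_pow, QuotientGroup.eq_one_iff]
        exact ⟨x, rfl⟩
    haveI : ((powMonoidHom o : A →* A).range).FiniteIndex := by
      constructor
      rw [Subgroup.index_eq_card]
      exact Nat.card_pos.ne'
    exact Subgroup.finiteIndex_of_le hKB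
  · -- torsion free
    rw [eq_bot_iff]
    rintro x ⟨hxB, hxT⟩
    have hxH : x ∈ f.ker := hBle _ hker_index hxB
    have h2 : (e (Additive.ofMul x)).2 = 0 := by
      simpa [hf, MonoidHom.mem_ker] using hxH
    have h1 := (htor x).mp hxT
    have h3 : e (Additive.ofMul x) = 0 :=
      Prod.ext (by simpa using h1) (by simpa using h2)
    have h0 : Additive.ofMul x = 0 := by apply e.injective; simpa using h3
    simpa using h0
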